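/- Let Q be the quadratic form on ℂ^N (N = Σ_i (d_i − 1) + (m − 1)) whose matrix is block-diagonal with blocks B₁,…,B_k, C, where B_i has diagonal entries 2D_i and off-diagonal entries M_i = D_i − d (with D_i = (d_i−1)d/d_i, d = ∏ d_j^{d_j}), and C is the (m−1)×(m−1) matrix with diagonal 2α^{m−2} and off-diagonal α^{m−2} for α ≠ 0. Then Q is nondegenerate. -/

import Mathlib

open scoped BigOperators

lemma aux_det_ne (N : ℕ) (a b : ℂ) (h1 : b - a ≠ 0) (h2 : (b - a) + N * a ≠ 0) :
    (Matrix.of fun s t : Fin N => if s = t then b else a).det ≠ 0 := by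
  have key : (Matrix.of fun s t : Fin N => if s = t then b else a)
      = (b - a) • (1 + Matrix.replicateCol Unit (fun _ => a / (b - a)) *
          Matrix.replicateRow Unit (fun _ => (1 : ℂ))) := by
    ext s t
    by_cases h : s = t <;>
      simp [h, Matrix.mul_apply, Matrix.one_apply, Matrix.replicateCol, Matrix.replicateRow] <;>
      field_simp <;> ring
  rw [key, Matrix.det_smul, Matrix.det_one_add_replicateCol_mul_replicateRow]
  have e1 : dotProduct (fun _ : Fin N => (1:ℂ)) (fun _ => a / (b - a))
      = N * (a / (b - a)) := by
    simp [dotProduct]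
  rw [e1]
  have e2 : (1 : ℂ) + N * (a / (b - a)) = ((b - a) + N * a) / (b - a) := by
    field_simp
  rw [e2]
  exact mul_ne_zero (pow_ne_zero _ h1) (div_ne_zero h2 h1)

lemma det_blockDiagonal'_eq {ι : Type*} [Fintype ι] [DecidableEq ι] [LinearOrder ι]
    (n' : ι → ℕ) (B : ∀ i, Matrix (Fin (n' i)) (Fin (n' i)) ℂ) :
    (Matrix.blockDiagonal' B).det = ∏ i, (B i).det := by
  rw [(Matrix.blockTriangular_blockDiagonal' B).det_fintype]
  refine Finset.prod_congr rfl fun a _ => ?_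
  let e : Fin (n' a) ≃ {x : Σ i, Fin (n' i) // x.1 = a} :=
    { toFun := fun j => ⟨⟨a, j⟩, rfl⟩
      invFun := fun x => Fin.cast (by rw [x.2]) x.1.2
      left_inv := fun j => rfl
      right_inv := by rintro ⟨⟨i, j⟩, h⟩; subst h; rfl }
  rw [← Matrix.det_submatrix_equiv_self e]
  congr 1
  ext j1 j2
  simp only [Matrix.submatrix_apply, Matrix.toSquareBlock_def]
  exact Matrix.blockDiagonal'_apply_eq B a j1 j2

/-- The Hessian of the quadratic form at the singular point is nondegenerate: the
block-diagonal matrix with blocks `Bᵢ` (diagonal `2Dᵢ`, off-diagonal `Mᵢ = Dᵢ − d`)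
of size `dᵢ − 1` and `C` (diagonal `2α^{m−2}`, off-diagonal `α^{m−2}`) of size
`m − 1` has nonzero determinant. -/
theorem stmt_11 (k : ℕ) (dd : Fin k → ℕ) (hdd : ∀ i, 2 ≤ dd i)
    (m : ℕ) (hm : 2 ≤ m) (α : ℂ) (hα : α ≠ 0)
    (d : ℂ) (hd : d = ∏ i, (dd i : ℂ) ^ (dd i))
    (D M : Fin k → ℂ)
    (hD : ∀ i, D i = ((dd i : ℂ) - 1) * d / (dd i))
    (hM : ∀ i, M i = D i - d)
    (n : Option (Fin k) → ℕ)
    (hn : n none = m - 1) (hns : ∀ i, n (some i) = dd i - 1)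
    (B : ∀ o : Option (Fin k), Matrix (Fin (n o)) (Fin (n o)) ℂ)
    (hBnone : B none = Matrix.of fun s t =>
      if s = t then 2 * α ^ (m - 2) else α ^ (m - 2))
    (hBsome : ∀ i, B (some i) = Matrix.of fun s t =>
      if s = t then 2 * D i else M i) :
    (Matrix.blockDiagonal' B).det ≠ 0 := by
  letI : LinearOrder (Option (Fin k)) :=
    LinearOrder.lift' (fun o => o.elim 0 (fun i => (i : ℕ) + 1)) (by
      rintro (_ | a) (_ | b) h <;> simp_all [Option.elim, Fin.val_inj])
  have hd0 : d ≠ 0 := by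
    rw [hd]
    refine Finset.prod_ne_zero_iff.2 fun i _ => pow_ne_zero _ ?_
    exact Nat.cast_ne_zero.2 (by have := hdd i; omega)
  rw [det_blockDiagonal'_eq n B, Fintype.prod_option]
  apply mul_ne_zero
  · rw [hBnone]
    have hba : 2 * α ^ (m - 2) - α ^ (m - 2) = α ^ (m - 2) := by ring
    apply aux_det_ne
    · rw [hba]; exact pow_ne_zero _ hα
    · rw [hba, hn]
      have hcast : ((m - 1 : ℕ) : ℂ) = (m : ℂ) - 1 := by
        have := Nat.cast_sub (R := ℂ) (show 1 ≤ m by omega)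
        simpa using this
      rw [hcast]
      have e3 : α ^ (m - 2) + ((m : ℂ) - 1) * α ^ (m - 2) = (m : ℂ) * α ^ (m - 2) := by ring
      rw [e3]
      exact mul_ne_zero (Nat.cast_ne_zero.2 (by omega)) (pow_ne_zero _ hα)
  · refine Finset.prod_ne_zero_iff.2 fun i _ => ?_
    rw [hBsome i]
    have hc : (dd i : ℂ) ≠ 0 := Nat.cast_ne_zero.2 (by have := hdd i; omega)
    have hcast : ((dd i - 1 : ℕ) : ℂ) = (dd i : ℂ) - 1 := by
      have := Nat.cast_sub (R := ℂ) (show 1 ≤ dd i from le_trans (by norm_num) (hdd i))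
      simpa using this
    have h2c : 2 * (dd i : ℂ) - 1 ≠ 0 := by
      intro h
      have h' : ((2 * dd i : ℕ) : ℂ) = ((1 : ℕ) : ℂ) := by push_cast; linear_combination h
      have := Nat.cast_inj (R := ℂ).1 h'
      omega
    apply aux_det_ne
    · have e1 : 2 * D i - M i = (2 * (dd i : ℂ) - 1) * d / (dd i) := by
        rw [hM i, hD i]; field_simp; ring
      rw [e1]
      exact div_ne_zero (mul_ne_zero h2c hd0) hc
    · rw [hns i, hcast]
      have e2 : 2 * D i - M i + ((dd i : ℂ) - 1) * M i = d := by
        rw [hM i, hD i]; field_simp; ring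
      rw [e2]; exact hd0
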